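/- Let A be an associative unital ℚ-algebra and let (a_n)_{n≥0} and (b_n)_{n≥1} be sequences in A with a_0 = 1 satisfying the recursion n·a_n = Σ_{i=1}^{n} a_{n−i}·b_i for all n ≥ 1. Then for every n ≥ 1: a_n = Σ_{l ≤ n} Σ_{k_1+⋯+k_l = n, k_i > 0} b_{k_1}·b_{k_2}⋯b_{k_l} / (k_1(k_1+k_2)⋯(k_1+⋯+k_l)), the inner sum being over all compositions (k_1,…,k_l) of n. -/

import Mathlib

section Aux

variable {A : Type*} [Ring A] [Algebra ℚ A]

/-- The term associated to a list of blocks. -/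
noncomputable def Fb (b : ℕ → A) (l : List ℕ) : A :=
  (∏ i ∈ Finset.range l.length, (((l.take (i + 1)).sum : ℕ) : ℚ))⁻¹ • (l.map b).prod

lemma Composition.ext' {m : ℕ} {c₁ c₂ : Composition m} (h : c₁.blocks = c₂.blocks) :
    c₁ = c₂ := by
  cases c₁; cases c₂; simp_all

lemma comp_heq {m₁ m₂ : ℕ} (h : m₁ = m₂) {c₁ : Composition m₁} {c₂ : Composition m₂}
    (hb : c₁.blocks = c₂.blocks) : HEq c₁ c₂ := by
  subst h; exact heq_of_eq (Composition.ext' hb)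

lemma Fb_nil (b : ℕ → A) : Fb b [] = 1 := by simp [Fb]

lemma blocks_eq_nil (c : Composition 0) : c.blocks = [] := by
  cases h : c.blocks with
  | nil => rfl
  | cons x l =>
    exfalso
    have hx : 0 < x := c.blocks_pos (h ▸ (List.mem_cons_self : x ∈ x :: l))
    have hs := c.blocks_sum
    rw [h] at hs
    simp [List.sum_cons] at hs
    omega

lemma sum_comp_zero (b : ℕ → A) :
    (∑ c : Composition 0, Fb b c.blocks) = 1 := by
  haveI : Unique (Composition 0) :=
    ⟨⟨⟨[], by simp, by simp⟩⟩, fun c => Composition.ext' (blocks_eq_nil c)⟩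
  rw [Fintype.sum_unique, blocks_eq_nil, Fb_nil]

lemma Fb_append (b : ℕ → A) (l : List ℕ) (i : ℕ) :
    Fb b (l ++ [i]) = (((l.sum + i : ℕ)) : ℚ)⁻¹ • (Fb b l * b i) := by
  unfold Fb
  rw [List.length_append, List.length_singleton, Finset.prod_range_succ]
  have h1 : ∀ j ∈ Finset.range l.length,
      ((((l ++ [i]).take (j + 1)).sum : ℕ) : ℚ) = (((l.take (j + 1)).sum : ℕ) : ℚ) := by
    intro j hj
    rw [List.take_append_of_le_length (by simpa using Finset.mem_range.mp hj)]
  rw [Finset.prod_congr rfl h1]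
  have h2 : (l ++ [i]).take (l.length + 1) = l ++ [i] :=
    List.take_of_length_le (by simp)
  rw [h2]
  simp only [List.sum_append, List.sum_cons, List.sum_nil, add_zero, List.map_append,
    List.prod_append, List.map_singleton, List.prod_cons, List.prod_nil, mul_one]
  rw [mul_inv, mul_comm, mul_smul, smul_mul_assoc]

lemma blocks_ne_nil {n : ℕ} (hn : 1 ≤ n) (c : Composition n) : c.blocks ≠ [] := by
  intro h
  have := c.blocks_sum
  rw [h] at this
  simp at this
  omega

/-- Forward map: append a last block. -/
def toF (n : ℕ) (p : Σ i : (Finset.Icc 1 n : Finset ℕ), Composition (n - (i : ℕ))) :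
    Composition n :=
  ⟨p.2.blocks ++ [(p.1 : ℕ)],
   by
     intro j hj
     rcases List.mem_append.mp hj with h | h
     · exact p.2.blocks_pos h
     · simp at h
       subst h
       exact (Finset.mem_Icc.mp p.1.2).1,
   by
     have h1 := p.2.blocks_sum
     have hle := (Finset.mem_Icc.mp p.1.2).2
     simp [h1]
     omega⟩

/-- Backward map: strip the last block. -/
def invF (n : ℕ) (hn : 1 ≤ n) (c : Composition n) :
    Σ i : (Finset.Icc 1 n : Finset ℕ), Composition (n - (i : ℕ)) :=
  ⟨⟨c.blocks.getLast (blocks_ne_nil hn c),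
    by
      rw [Finset.mem_Icc]
      have hdec : c.blocks.dropLast.sum + c.blocks.getLast (blocks_ne_nil hn c)
          = c.blocks.sum := by
        conv_rhs => rw [← List.dropLast_append_getLast (blocks_ne_nil hn c)]
        simp
      have hs := c.blocks_sum
      have hpos : 0 < c.blocks.getLast (blocks_ne_nil hn c) :=
        c.blocks_pos (List.getLast_mem (blocks_ne_nil hn c))
      omega⟩,
   ⟨c.blocks.dropLast,
    fun hj => c.blocks_pos (List.mem_of_mem_dropLast hj),
    by
      have hdec : c.blocks.dropLast.sum + c.blocks.getLast (blocks_ne_nil hn c)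
          = c.blocks.sum := by
        conv_rhs => rw [← List.dropLast_append_getLast (blocks_ne_nil hn c)]
        simp
      have hs := c.blocks_sum
      show c.blocks.dropLast.sum = n - c.blocks.getLast (blocks_ne_nil hn c)
      omega⟩⟩

lemma toF_invF (n : ℕ) (hn : 1 ≤ n) (c : Composition n) : toF n (invF n hn c) = c := by
  apply Composition.ext'
  show c.blocks.dropLast ++ [c.blocks.getLast (blocks_ne_nil hn c)] = c.blocks
  exact List.dropLast_append_getLast (blocks_ne_nil hn c)

lemma invF_toF (n : ℕ) (hn : 1 ≤ n)
    (p : Σ i : (Finset.Icc 1 n : Finset ℕ), Composition (n - (i : ℕ))) :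
    invF n hn (toF n p) = p := by
  rcases p with ⟨⟨i, hi⟩, c⟩
  have hgl : (c.blocks ++ [i]).getLast (by simp) = i := List.getLast_append _
  refine Sigma.ext (Subtype.ext ?_) (comp_heq ?_ ?_)
  · exact hgl
  · exact congrArg (fun x => n - x) hgl
  · show (c.blocks ++ [i]).dropLast = c.blocks
    exact List.dropLast_concat

/-- The equivalence between compositions of `n` (for `n ≥ 1`) and pairs of a last block
`i ∈ [1, n]` together with a composition of `n - i`. -/
def compEquiv (n : ℕ) (hn : 1 ≤ n) :
    (Σ i : (Finset.Icc 1 n : Finset ℕ), Composition (n - (i : ℕ))) ≃ Composition n where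
  toFun := toF n
  invFun := invF n hn
  left_inv := invF_toF n hn
  right_inv := toF_invF n hn

lemma sum_comp_succ (b : ℕ → A) (n : ℕ) (hn : 1 ≤ n) :
    (∑ c : Composition n, Fb b c.blocks)
      = ∑ i ∈ Finset.Icc 1 n, ∑ c : Composition (n - i), Fb b (c.blocks ++ [i]) := by
  rw [← Fintype.sum_equiv (compEquiv n hn)
    (fun p => Fb b (p.2.blocks ++ [(p.1 : ℕ)])) (fun c => Fb b c.blocks) (fun p => rfl)]
  rw [← Finset.univ_sigma_univ, Finset.sum_sigma]
  rw [← Finset.sum_coe_sort (Finset.Icc 1 n)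
    (fun i => ∑ c : Composition (n - i), Fb b (c.blocks ++ [i]))]

end Aux

/-- if `a₀ = 1` and `n·aₙ = Σ_{i=1}^n a_{n−i}·b_i` in a unital
associative `ℚ`-algebra, then
`aₙ = Σ_{k₁+⋯+k_l=n, k_i>0} b_{k₁}⋯b_{k_l}/(k₁(k₁+k₂)⋯(k₁+⋯+k_l))`,
the sum being over all compositions of `n`. -/
theorem recursion_solution_compositions {A : Type*} [Ring A] [Algebra ℚ A]
    (a b : ℕ → A) (ha0 : a 0 = 1)
    (hrec : ∀ n : ℕ, 1 ≤ n → n • a n = ∑ i ∈ Finset.Icc 1 n, a (n - i) * b i) :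
    ∀ n : ℕ, 1 ≤ n →
      a n = ∑ c : Composition n,
        (∏ i ∈ Finset.range c.length, (c.sizeUpTo (i + 1) : ℚ))⁻¹ •
          (List.ofFn (fun i : Fin c.length => b (c.blocksFun i))).prod := by
  have hFb : ∀ m : ℕ, ∀ c : Composition m,
      (∏ i ∈ Finset.range c.length, (c.sizeUpTo (i + 1) : ℚ))⁻¹ •
        (List.ofFn (fun i : Fin c.length => b (c.blocksFun i))).prod = Fb b c.blocks := by
    intro m c
    unfold Fb
    rw [show (List.ofFn fun i : Fin c.length => b (c.blocksFun i)) = c.blocks.map b from by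
      rw [← c.ofFn_blocksFun, List.map_ofFn]; rfl]
    rfl
  set S : ℕ → A := fun m => ∑ c : Composition m, Fb b c.blocks with hS
  have hS0 : S 0 = 1 := sum_comp_zero b
  suffices h : ∀ n : ℕ, 1 ≤ n → a n = S n by
    intro n hn
    rw [h n hn, hS]
    exact Finset.sum_congr rfl fun c _ => (hFb n c).symm
  intro n
  induction n using Nat.strong_induction_on with
  | _ n ih =>
    intro hn
    have hrecn := hrec n hn
    have key : ∀ i ∈ Finset.Icc 1 n, a (n - i) = S (n - i) := by
      intro i hi
      rw [Finset.mem_Icc] at hi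
      rcases Nat.lt_or_ge i n with h | h
      · exact ih (n - i) (by omega) (by omega)
      · have : n - i = 0 := by omega
        rw [this, hS0, ha0]
    rw [Finset.sum_congr rfl fun i hi => by rw [key i hi]] at hrecn
    -- compute n • S n
    have hSn : (n : ℚ) • S n = ∑ i ∈ Finset.Icc 1 n, S (n - i) * b i := by
      rw [hS]
      simp only
      rw [sum_comp_succ b n hn, Finset.smul_sum]
      refine Finset.sum_congr rfl fun i hi => ?_
      rw [Finset.mem_Icc] at hi
      have hsum : ∀ c : Composition (n - i), Fb b (c.blocks ++ [i])
          = (n : ℚ)⁻¹ • (Fb b c.blocks * b i) := by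
        intro c
        have hc : ((c.blocks.sum + i : ℕ) : ℚ) = (n : ℚ) := by
          have hbs := c.blocks_sum
          exact_mod_cast congrArg (Nat.cast : ℕ → ℚ) (by omega : c.blocks.sum + i = n)
        rw [Fb_append, hc]
      rw [Finset.sum_congr rfl fun c _ => hsum c, ← Finset.smul_sum, smul_smul,
        mul_inv_cancel₀ (by exact_mod_cast (by omega : n ≠ 0)), one_smul, Finset.sum_mul]
    have hna : (n : ℚ) • a n = (n : ℚ) • S n := by
      rw [hSn, ← hrecn, ← Nat.cast_smul_eq_nsmul ℚ n (a n)]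
    have hn0 : (n : ℚ) ≠ 0 := by exact_mod_cast (by omega : n ≠ 0)
    have h2 := congrArg (fun x => (n : ℚ)⁻¹ • x) hna
    simpa [smul_smul, inv_mul_cancel₀ hn0] using h2
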